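/- The Student distribution p_{μ,σ}(x) = N(σ,ν)·[1 + (x−μ)²/(ν σ²)]^{−(ν+1)/2} with ν > 2 can be written as a 2-parameter M^(α)-family with α = (ν−1)/(ν+1): namely p_θ(x) = Z(θ)[1 + w₁(θ)x² + w₂(θ)x]^{1/(α−1)}, where b_α = (1−α)/(1+α), w₁(θ) = b_α/(σ² + b_α μ²), w₂(θ) = −2μ b_α/(σ² + b_α μ²), and Z(θ) = N(σ,ν)(1 + μ²b_α/σ²)^{1/(α−1)}. -/

import Mathlib

/-- The Student distribution with `ν > 2` degrees of freedom is a 2-parameter `M^(α)`-family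
with `α = (ν−1)/(ν+1)`: the stated algebraic identity between the Student density and the
power-law form `Z(θ)[1 + w₁(θ)x² + w₂(θ)x]^{1/(α−1)}`. -/
theorem student_is_M_alpha (ν μ σ : ℝ) (hν : 2 < ν) (hσ : 0 < σ) :
    let α := (ν - 1) / (ν + 1)
    let b := (1 - α) / (1 + α)
    let N := Real.Gamma ((ν + 1) / 2) / (Real.sqrt (ν * Real.pi * σ ^ 2) * Real.Gamma (ν / 2))
    ∀ x : ℝ,
      N * (1 + (x - μ) ^ 2 / (ν * σ ^ 2)) ^ (-(ν + 1) / 2)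
        = (N * (1 + μ ^ 2 * b / σ ^ 2) ^ ((α - 1)⁻¹)) *
          (1 + (b / (σ ^ 2 + b * μ ^ 2)) * x ^ 2
             + (-2 * μ * b / (σ ^ 2 + b * μ ^ 2)) * x) ^ ((α - 1)⁻¹) := by
  intro α b N x
  have hν0 : (0:ℝ) < ν := by linarith
  have hν1 : (ν:ℝ) + 1 ≠ 0 := by positivity
  have hνne : (ν:ℝ) ≠ 0 := ne_of_gt hν0
  have hσ2 : (0:ℝ) < σ ^ 2 := by positivity
  have hb : b = 1 / ν := by
    show (1 - (ν - 1) / (ν + 1)) / (1 + (ν - 1) / (ν + 1)) = 1 / ν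
    rw [div_eq_div_iff (by rw [one_add_div hν1]; exact div_ne_zero (by linarith) hν1) hνne]
    field_simp
    ring
  have hexp : (α - 1)⁻¹ = -(ν + 1) / 2 := by
    have : α - 1 = -(2 / (ν + 1)) := by
      show (ν - 1) / (ν + 1) - 1 = -(2 / (ν + 1))
      field_simp
      ring
    rw [this]
    field_simp
  have hden : (0:ℝ) < ν * σ ^ 2 + μ ^ 2 := by positivity
  have hC : (0:ℝ) ≤ 1 + μ ^ 2 * b / σ ^ 2 := by
    rw [hb]; positivity
  have hD : (0:ℝ) ≤ 1 + (b / (σ ^ 2 + b * μ ^ 2)) * x ^ 2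
      + (-2 * μ * b / (σ ^ 2 + b * μ ^ 2)) * x := by
    rw [hb]
    have h1 : σ ^ 2 + 1 / ν * μ ^ 2 = (ν * σ ^ 2 + μ ^ 2) / ν := by field_simp
    rw [h1]
    have : 1 + 1 / ν / ((ν * σ ^ 2 + μ ^ 2) / ν) * x ^ 2
        + -2 * μ * (1 / ν) / ((ν * σ ^ 2 + μ ^ 2) / ν) * x
        = (ν * σ ^ 2 + (x - μ) ^ 2) / (ν * σ ^ 2 + μ ^ 2) := by
      field_simp
      ring
    rw [this]
    positivity
  have hA : 1 + (x - μ) ^ 2 / (ν * σ ^ 2)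
      = (1 + μ ^ 2 * b / σ ^ 2) * (1 + (b / (σ ^ 2 + b * μ ^ 2)) * x ^ 2
        + (-2 * μ * b / (σ ^ 2 + b * μ ^ 2)) * x) := by
    rw [hb]
    have h1 : σ ^ 2 + 1 / ν * μ ^ 2 = (ν * σ ^ 2 + μ ^ 2) / ν := by field_simp
    rw [h1]
    field_simp
    ring
  rw [hA, hexp, Real.mul_rpow hC hD]
  ring
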